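/- Let {x_i}_{i∈[T]} be vectors in ℝ^d with ‖x_i‖₂ ≤ L, Λ₀ positive-definite with λ_min(Λ₀) ≥ max(1, L²), and Λ_t = Λ₀ + ∑_{i=1}^t x_i x_iᵀ. Then ∑_{i=1}^T ‖x_i‖²_{Λ_{i-1}^{-1}} ≤ 2·log(det(Λ_T)/det(Λ₀)). -/

import Mathlib

open Matrix Real

/-- Elliptical potential lemma under a minimum-eigenvalue condition: if `‖x i‖₂ ≤ L`,
`λ_min(Λ₀) ≥ max(1, L²)`, and `Λ t = Λ₀ + ∑_{i<t} x i x iᵀ`, then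
`∑_{i<T} ‖x i‖²_{(Λ i)⁻¹} ≤ 2 log(det (Λ T) / det Λ₀)`. -/
theorem stmt_9 {d : ℕ} (T : ℕ) (L : ℝ) (x : ℕ → Fin d → ℝ)
    (hx : ∀ i, Real.sqrt (∑ j, (x i j)^2) ≤ L)
    (Λ₀ : Matrix (Fin d) (Fin d) ℝ) (hΛ₀ : Λ₀.PosDef)
    (hmin : ∀ v : Fin d → ℝ, max 1 (L^2) * (∑ j, (v j)^2) ≤ v ⬝ᵥ Λ₀.mulVec v)
    (Λ : ℕ → Matrix (Fin d) (Fin d) ℝ)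
    (hΛ : ∀ t, Λ t = Λ₀ + ∑ i ∈ Finset.range t, vecMulVec (x i) (x i)) :
    ∑ i ∈ Finset.range T, x i ⬝ᵥ ((Λ i)⁻¹).mulVec (x i)
      ≤ 2 * Real.log ((Λ T).det / Λ₀.det) := by
  set c : ℝ := max 1 (L^2) with hc
  have hc1 : (1:ℝ) ≤ c := le_max_left _ _
  have hL2 : ∀ i, ∑ j, (x i j)^2 ≤ c := by
    intro i
    have h0 : (0:ℝ) ≤ ∑ j, (x i j)^2 := Finset.sum_nonneg fun _ _ => sq_nonneg _
    have h1 : ∑ j, (x i j)^2 ≤ L^2 := by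
      have := pow_le_pow_left₀ (Real.sqrt_nonneg _) (hx i) 2
      rwa [Real.sq_sqrt h0] at this
    exact h1.trans (le_max_right _ _)
  -- quadratic form of the rank-one terms
  have hvv : ∀ (w v : Fin d → ℝ), v ⬝ᵥ (vecMulVec w w) *ᵥ v = (w ⬝ᵥ v)^2 := by
    intro w v
    simp only [dotProduct, mulVec, vecMulVec_apply, sq, Finset.sum_mul, Finset.mul_sum]
    rw [Finset.sum_comm]
    apply Finset.sum_congr rfl; intro j _
    apply Finset.sum_congr rfl; intro k _
    ring
  -- Hermitian
  have hherm : ∀ t, (Λ t).IsHermitian := by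
    intro t
    rw [hΛ t]
    apply hΛ₀.isHermitian.add
    apply Finset.sum_induction _ Matrix.IsHermitian (fun a b => Matrix.IsHermitian.add)
      (Matrix.isHermitian_zero)
    intro i _
    ext j k
    simp [conjTranspose_apply, vecMulVec_apply, mul_comm]
  -- quadratic monotonicity
  have hquad : ∀ t (v : Fin d → ℝ), v ⬝ᵥ Λ₀ *ᵥ v ≤ v ⬝ᵥ (Λ t) *ᵥ v := by
    intro t v
    rw [hΛ t, add_mulVec, dotProduct_add]
    have : 0 ≤ v ⬝ᵥ (∑ i ∈ Finset.range t, vecMulVec (x i) (x i)) *ᵥ v := by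
      apply Finset.sum_induction _ (fun M : Matrix (Fin d) (Fin d) ℝ => 0 ≤ v ⬝ᵥ M *ᵥ v)
      · intro a b ha hb
        rw [add_mulVec, dotProduct_add]
        linarith
      · simp
      · intro i _
        rw [hvv]; positivity
    linarith
  have hmin' : ∀ t (v : Fin d → ℝ), c * (∑ j, (v j)^2) ≤ v ⬝ᵥ (Λ t) *ᵥ v :=
    fun t v => (hmin v).trans (hquad t v)
  have hPos : ∀ t, (Λ t).PosDef := by
    intro t
    refine PosDef.of_dotProduct_mulVec_pos (hherm t) fun v hv => ?_
    simp only [star_trivial, RCLike.ofReal_pos]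
    have := hΛ₀.dotProduct_mulVec_pos hv
    simp only [star_trivial] at this
    exact lt_of_lt_of_le this (hquad t v)
  have hdetpos : ∀ t, 0 < (Λ t).det := fun t => (hPos t).det_pos
  -- per-step quantities
  set u : ℕ → ℝ := fun i => x i ⬝ᵥ ((Λ i)⁻¹).mulVec (x i) with hu
  have hu0 : ∀ i, 0 ≤ u i := by
    intro i
    have h := ((hPos i).inv).posSemidef.dotProduct_mulVec_nonneg (x i)
    simpa using h
  have husq : ∀ i, (u i)^2 ≤ u i := by
    intro i
    set y : Fin d → ℝ := ((Λ i)⁻¹).mulVec (x i) with hy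
    have hAy : (Λ i) *ᵥ y = x i := by
      rw [hy, Matrix.mulVec_mulVec, Matrix.mul_nonsing_inv _ (hdetpos i).ne'.isUnit,
        Matrix.one_mulVec]
    have hyy : c * (∑ j, (y j)^2) ≤ u i := by
      have h1 := hmin' i y
      rw [hAy] at h1
      rwa [dotProduct_comm] at h1
    have hyy0 : 0 ≤ ∑ j, (y j)^2 := Finset.sum_nonneg fun _ _ => sq_nonneg _
    have hcs : (u i)^2 ≤ (∑ j, (x i j)^2) * (∑ j, (y j)^2) := by
      have := Finset.sum_mul_sq_le_sq_mul_sq Finset.univ (x i) y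
      simpa [hu, dotProduct] using this
    calc (u i)^2 ≤ (∑ j, (x i j)^2) * (∑ j, (y j)^2) := hcs
      _ ≤ c * (∑ j, (y j)^2) := mul_le_mul_of_nonneg_right (hL2 i) hyy0
      _ ≤ u i := hyy
  have hu1 : ∀ i, u i ≤ 1 := fun i => by nlinarith [husq i, hu0 i]
  -- determinant recursion
  have hdet : ∀ i, (Λ (i+1)).det = (Λ i).det * (1 + u i) := by
    intro i
    have hstep : Λ (i+1) = Λ i + vecMulVec (x i) (x i) := by
      rw [hΛ (i+1), hΛ i, Finset.sum_range_succ, add_assoc]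
    rw [hstep, vecMulVec_eq Unit, Matrix.det_add_replicateCol_mul_replicateRow (hdetpos i).ne'.isUnit]
    congr 1
    rw [Matrix.det_unique]
    simp only [Matrix.mul_apply, Matrix.mulVec, dotProduct, hu, Finset.sum_mul, Finset.mul_sum,
      Matrix.add_apply, Matrix.one_apply_eq, Matrix.replicateRow_apply, Matrix.replicateCol_apply]
    congr 1
    rw [Finset.sum_comm]
    apply Finset.sum_congr rfl; intro a _
    apply Finset.sum_congr rfl; intro b _
    ring
  -- per-step log inequality
  have hlog : ∀ i, u i ≤ 2 * (Real.log (Λ (i+1)).det - Real.log (Λ i).det) := by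
    intro i
    have h1u : (0:ℝ) < 1 + u i := by linarith [hu0 i]
    have hlog1 : Real.log (Λ (i+1)).det - Real.log (Λ i).det = Real.log (1 + u i) := by
      rw [hdet i, Real.log_mul (hdetpos i).ne' h1u.ne']
      ring
    rw [hlog1]
    have h2 : 1 - (1 + u i)⁻¹ ≤ Real.log (1 + u i) := Real.one_sub_inv_le_log_of_pos h1u
    have h3 : u i ≤ 2 * (1 - (1 + u i)⁻¹) := by
      have hiv : (1 + u i) * (1 + u i)⁻¹ = 1 := mul_inv_cancel₀ h1u.ne'
      nlinarith [husq i, hu0 i, hu1 i, inv_nonneg.2 h1u.le]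
    linarith
  -- sum up and telescope
  calc ∑ i ∈ Finset.range T, x i ⬝ᵥ ((Λ i)⁻¹).mulVec (x i)
      ≤ ∑ i ∈ Finset.range T, 2 * (Real.log (Λ (i+1)).det - Real.log (Λ i).det) :=
        Finset.sum_le_sum fun i _ => hlog i
    _ = 2 * (Real.log (Λ T).det - Real.log (Λ 0).det) := by
        rw [← Finset.mul_sum, Finset.sum_range_sub (fun i => Real.log (Λ i).det)]
    _ = 2 * Real.log ((Λ T).det / Λ₀.det) := by
        have h0 : Λ 0 = Λ₀ := by simp [hΛ 0]
        rw [h0, Real.log_div (hdetpos T).ne' hΛ₀.det_pos.ne']
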